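/- Let K_F, K_X > 0 and let x_1, …, x_n be vectors in ℝ^m with ‖x_i‖₂ ≤ K_X for all i. Let σ be drawn from the uniform probability measure on {−1, 1}^{n×d}. Then E_σ[ sup { (1/n) ∑_{i=1}^n ∑_{k=1}^d σ_{ik} (F x_i)_k : F a d×m real matrix with |F_{kj}| ≤ K_F for all entries } ] ≤ d · m · K_F · K_X / √n. -/

import Mathlib

open MeasureTheory

/-- `rademacherSign b` is `1` if `b = true` and `-1` otherwise, so that a uniform random
Boolean encodes a uniform Rademacher sign in `{-1, 1}`. -/
noncomputable def rademacherSign (b : Bool) : ℝ := if b then 1 else -1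

lemma rad_mul_self (b : Bool) : rademacherSign b * rademacherSign b = 1 := by
  cases b <;> simp [rademacherSign]

lemma rad_not (b : Bool) : rademacherSign (!b) = - rademacherSign b := by
  cases b <;> simp [rademacherSign]

lemma rad_abs (b : Bool) : |rademacherSign b| = 1 := by
  cases b <;> simp [rademacherSign]

-- flip the (i,k) bit
noncomputable def flipBit {n d : ℕ} (i : Fin n) (k : Fin d) (σ : Fin n → Fin d → Bool) :
    Fin n → Fin d → Bool :=
  Function.update σ i (Function.update (σ i) k (!(σ i k)))

lemma flipBit_apply {n d : ℕ} (i : Fin n) (k : Fin d) (σ : Fin n → Fin d → Bool)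
    (i' : Fin n) (k' : Fin d) :
    flipBit i k σ i' k' = if i' = i ∧ k' = k then !(σ i k) else σ i' k' := by
  unfold flipBit
  rcases eq_or_ne i' i with rfl | hi
  · simp only [Function.update_self]
    rcases eq_or_ne k' k with rfl | hk
    · simp
    · simp [Function.update_of_ne hk, hk]
  · simp [Function.update_of_ne hi, hi]

lemma flipBit_flipBit {n d : ℕ} (i : Fin n) (k : Fin d) (σ : Fin n → Fin d → Bool) :
    flipBit i k (flipBit i k σ) = σ := by
  funext i' k'
  rw [flipBit_apply]
  rcases eq_or_ne i' i with rfl | hi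
  · rcases eq_or_ne k' k with rfl | hk
    · simp [flipBit_apply]
    · simp [flipBit_apply, hk]
  · simp [flipBit_apply, hi]

lemma cancel {n d : ℕ} (i i' : Fin n) (k : Fin d) (hne : i ≠ i') :
    ∑ σ : Fin n → Fin d → Bool,
      rademacherSign (σ i k) * rademacherSign (σ i' k) = 0 := by
  refine Finset.sum_ninvolution (flipBit i k) (fun σ => ?_) (fun σ hσ => ?_)
    (fun σ => Finset.mem_univ _) (flipBit_flipBit i k)
  · have h1 : flipBit i k σ i k = !(σ i k) := by simp [flipBit_apply]
    have h2 : flipBit i k σ i' k = σ i' k := by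
      rw [flipBit_apply]; simp [hne.symm]
    rw [h1, h2, rad_not]; ring
  · intro h
    have := congrFun (congrFun h i) k
    simp [flipBit_apply] at this

lemma sq_sum {n d : ℕ} (k : Fin d) (a : Fin n → ℝ) :
    ∑ σ : Fin n → Fin d → Bool, (∑ i, rademacherSign (σ i k) * a i) ^ 2
      = (Fintype.card (Fin n → Fin d → Bool) : ℝ) * ∑ i, (a i) ^ 2 := by
  have expand : ∀ σ : Fin n → Fin d → Bool,
      (∑ i, rademacherSign (σ i k) * a i) ^ 2
        = ∑ i, ∑ i', (rademacherSign (σ i k) * rademacherSign (σ i' k)) * (a i * a i') := by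
    intro σ
    rw [sq, Finset.sum_mul_sum]
    congr 1; funext i; congr 1; funext i'; ring
  simp_rw [expand]
  rw [Finset.sum_comm]
  have : ∀ i : Fin n, ∑ σ : Fin n → Fin d → Bool,
      ∑ i', (rademacherSign (σ i k) * rademacherSign (σ i' k)) * (a i * a i')
      = (Fintype.card (Fin n → Fin d → Bool) : ℝ) * (a i)^2 := by
    intro i
    rw [Finset.sum_comm]
    have : ∀ i' : Fin n,
        ∑ σ : Fin n → Fin d → Bool,
          (rademacherSign (σ i k) * rademacherSign (σ i' k)) * (a i * a i')
        = (if i' = i then (Fintype.card (Fin n → Fin d → Bool) : ℝ) * (a i)^2 else 0) := by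
      intro i'
      rcases eq_or_ne i' i with rfl | hne
      · simp only [if_pos rfl]
        simp_rw [rad_mul_self, one_mul]
        rw [Finset.sum_const, nsmul_eq_mul, Finset.card_univ, sq]
        simp
      · rw [if_neg hne]
        rw [← Finset.sum_mul]
        rw [cancel i i' k (Ne.symm hne), zero_mul]
    simp_rw [this]
    simp
  simp_rw [this]
  rw [← Finset.mul_sum]

lemma khintchineL1 {n d : ℕ} (k : Fin d) (a : Fin n → ℝ) :
    ∑ σ : Fin n → Fin d → Bool, |∑ i, rademacherSign (σ i k) * a i|
      ≤ (Fintype.card (Fin n → Fin d → Bool) : ℝ) * Real.sqrt (∑ i, (a i) ^ 2) := by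
  set N : ℝ := (Fintype.card (Fin n → Fin d → Bool) : ℝ) with hNdef
  have hN : 0 ≤ N := Nat.cast_nonneg _
  set S : ℝ := ∑ σ : Fin n → Fin d → Bool, |∑ i, rademacherSign (σ i k) * a i| with hSdef
  have hS : 0 ≤ S := Finset.sum_nonneg fun _ _ => abs_nonneg _
  have hT : 0 ≤ ∑ i, (a i) ^ 2 := Finset.sum_nonneg fun _ _ => sq_nonneg _
  have hsq : S ^ 2 ≤ (N * Real.sqrt (∑ i, (a i) ^ 2)) ^ 2 := by
    have hCS := Finset.sum_mul_sq_le_sq_mul_sq Finset.univ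
      (fun σ : Fin n → Fin d → Bool => |∑ i, rademacherSign (σ i k) * a i|)
      (fun _ => (1 : ℝ))
    simp only [mul_one, one_pow, Finset.sum_const, nsmul_eq_mul, Finset.card_univ] at hCS
    have habs : ∀ σ : Fin n → Fin d → Bool,
        |∑ i, rademacherSign (σ i k) * a i| ^ 2 = (∑ i, rademacherSign (σ i k) * a i) ^ 2 :=
      fun σ => sq_abs _
    rw [Finset.sum_congr rfl (fun σ _ => habs σ), sq_sum k a] at hCS
    calc S ^ 2 ≤ N * (∑ i, (a i) ^ 2) * N := hCS
      _ = (N * Real.sqrt (∑ i, (a i) ^ 2)) ^ 2 := by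
          rw [mul_pow, Real.sq_sqrt hT]; ring
  calc S = Real.sqrt (S ^ 2) := (Real.sqrt_sq hS).symm
    _ ≤ Real.sqrt ((N * Real.sqrt (∑ i, (a i) ^ 2)) ^ 2) := Real.sqrt_le_sqrt hsq
    _ = N * Real.sqrt (∑ i, (a i) ^ 2) :=
        Real.sqrt_sq (mul_nonneg hN (Real.sqrt_nonneg _))

theorem stmt7 (n m d : ℕ) (K_F K_X : ℝ) (hKF : 0 < K_F) (hKX : 0 < K_X)
    (x : Fin n → EuclideanSpace ℝ (Fin m)) (hx : ∀ i, ‖x i‖ ≤ K_X) :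
    ∫ σ : Fin n → Fin d → Bool,
        sSup ((fun F : Matrix (Fin d) (Fin m) ℝ =>
            (1 / (n : ℝ)) * ∑ i, ∑ k, rademacherSign (σ i k) * (F.mulVec (x i)) k) ''
          {F : Matrix (Fin d) (Fin m) ℝ | ∀ k j, |F k j| ≤ K_F})
          ∂((PMF.uniformOfFintype (Fin n → Fin d → Bool)).toMeasure) ≤
      d * m * K_F * K_X / Real.sqrt n := by
  set N : ℝ := (Fintype.card (Fin n → Fin d → Bool) : ℝ) with hNdef
  have hNpos : 0 < N := by positivity
  set Z : (Fin n → Fin d → Bool) → Fin d → Fin m → ℝ :=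
    fun σ k j => ∑ i, rademacherSign (σ i k) * x i j with hZdef
  set bnd : (Fin n → Fin d → Bool) → ℝ :=
    fun σ => (K_F / n) * ∑ k, ∑ j, |Z σ k j| with hbnddef
  -- rewrite the integral as a finite sum
  rw [integral_fintype (Integrable.of_finite)]
  have hμ : ∀ σ : Fin n → Fin d → Bool,
      (((PMF.uniformOfFintype (Fin n → Fin d → Bool)).toMeasure) {σ}).toReal = N⁻¹ := by
    intro σ
    rw [PMF.toMeasure_apply_singleton _ _ (measurableSet_singleton σ),
      PMF.uniformOfFintype_apply]
    simp [hNdef]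
  -- pointwise bound on the sup
  have hsup : ∀ σ : Fin n → Fin d → Bool,
      sSup ((fun F : Matrix (Fin d) (Fin m) ℝ =>
            (1 / (n : ℝ)) * ∑ i, ∑ k, rademacherSign (σ i k) * (F.mulVec (x i)) k) ''
          {F : Matrix (Fin d) (Fin m) ℝ | ∀ k j, |F k j| ≤ K_F}) ≤ bnd σ := by
    intro σ
    have hbnd0 : 0 ≤ bnd σ := by
      apply mul_nonneg (by positivity)
      exact Finset.sum_nonneg fun _ _ => Finset.sum_nonneg fun _ _ => abs_nonneg _
    refine Real.sSup_le ?_ hbnd0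
    rintro y ⟨F, hF, rfl⟩
    have hre : ∑ i, ∑ k, rademacherSign (σ i k) * (F.mulVec (x i)) k
        = ∑ k, ∑ j, F k j * Z σ k j := by
      simp_rw [Matrix.mulVec, dotProduct, Finset.mul_sum]
      rw [Finset.sum_comm]
      refine Finset.sum_congr rfl fun k _ => ?_
      rw [Finset.sum_comm]
      refine Finset.sum_congr rfl fun j _ => ?_
      rw [Finset.mul_sum]
      exact Finset.sum_congr rfl fun i _ => by ring
    simp only [hre]
    have hterm : ∀ k j, F k j * Z σ k j ≤ K_F * |Z σ k j| := by
      intro k j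
      calc F k j * Z σ k j ≤ |F k j * Z σ k j| := le_abs_self _
        _ = |F k j| * |Z σ k j| := abs_mul _ _
        _ ≤ K_F * |Z σ k j| := mul_le_mul_of_nonneg_right (hF k j) (abs_nonneg _)
    calc (1 / (n : ℝ)) * ∑ k, ∑ j, F k j * Z σ k j
        ≤ (1 / (n : ℝ)) * ∑ k, ∑ j, K_F * |Z σ k j| := by
          apply mul_le_mul_of_nonneg_left _ (by positivity)
          exact Finset.sum_le_sum fun k _ => Finset.sum_le_sum fun j _ => hterm k j
      _ = bnd σ := by
          rw [hbnddef]
          simp_rw [← Finset.mul_sum]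
          ring
  -- bound on coordinates
  have hsqrt : ∀ j : Fin m, Real.sqrt (∑ i, (x i j) ^ 2) ≤ Real.sqrt n * K_X := by
    intro j
    have hcoord : ∀ i, (x i j) ^ 2 ≤ K_X ^ 2 := by
      intro i
      have h1 : (x i j) ^ 2 ≤ ∑ j', (x i j') ^ 2 :=
        Finset.single_le_sum (f := fun j' => (x i j') ^ 2) (fun _ _ => sq_nonneg _) (Finset.mem_univ j)
      have h2 : ∑ j', (x i j') ^ 2 = ‖x i‖ ^ 2 := by
        rw [EuclideanSpace.norm_eq, Real.sq_sqrt (by positivity)]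
        simp [sq_abs]
      have h3 : ‖x i‖ ^ 2 ≤ K_X ^ 2 :=
        pow_le_pow_left₀ (norm_nonneg _) (hx i) 2
      linarith
    have hsum : ∑ i, (x i j) ^ 2 ≤ (n : ℝ) * K_X ^ 2 := by
      calc ∑ i : Fin n, (x i j) ^ 2 ≤ ∑ _i : Fin n, K_X ^ 2 :=
            Finset.sum_le_sum fun i _ => hcoord i
        _ = (n : ℝ) * K_X ^ 2 := by
            rw [Finset.sum_const, nsmul_eq_mul, Finset.card_univ, Fintype.card_fin]
    calc Real.sqrt (∑ i, (x i j) ^ 2) ≤ Real.sqrt ((n : ℝ) * K_X ^ 2) :=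
          Real.sqrt_le_sqrt hsum
      _ = Real.sqrt n * K_X := by
          rw [Real.sqrt_mul (Nat.cast_nonneg n), Real.sqrt_sq hKX.le]
  -- sum of the bounds
  have hbndsum : ∑ σ : Fin n → Fin d → Bool, bnd σ ≤ N * (d * m * K_F * K_X / Real.sqrt n) := by
    have h1 : ∑ σ : Fin n → Fin d → Bool, bnd σ
        = (K_F / n) * ∑ k : Fin d, ∑ j : Fin m, ∑ σ : Fin n → Fin d → Bool, |Z σ k j| := by
      rw [hbnddef, ← Finset.mul_sum]
      congr 1
      rw [Finset.sum_comm]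
      exact Finset.sum_congr rfl fun k _ => Finset.sum_comm
    have h2 : ∀ (k : Fin d) (j : Fin m),
        ∑ σ : Fin n → Fin d → Bool, |Z σ k j| ≤ N * (Real.sqrt n * K_X) := by
      intro k j
      calc ∑ σ : Fin n → Fin d → Bool, |Z σ k j|
          ≤ N * Real.sqrt (∑ i, (x i j) ^ 2) := khintchineL1 k (fun i => x i j)
        _ ≤ N * (Real.sqrt n * K_X) :=
            mul_le_mul_of_nonneg_left (hsqrt j) hNpos.le
    calc ∑ σ : Fin n → Fin d → Bool, bnd σ
        = (K_F / n) * ∑ k : Fin d, ∑ j : Fin m, ∑ σ : Fin n → Fin d → Bool, |Z σ k j| := h1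
      _ ≤ (K_F / n) * ∑ k : Fin d, ∑ j : Fin m, N * (Real.sqrt n * K_X) := by
          apply mul_le_mul_of_nonneg_left _ (by positivity)
          exact Finset.sum_le_sum fun k _ => Finset.sum_le_sum fun j _ => h2 k j
      _ = (K_F / n) * ((d : ℝ) * ((m : ℝ) * (N * (Real.sqrt n * K_X)))) := by
          simp [Finset.sum_const, Finset.card_univ, mul_assoc]
      _ = (N * (d * m * K_F * K_X)) * (Real.sqrt n / n) := by ring
      _ = (N * (d * m * K_F * K_X)) * (1 / Real.sqrt n) := by rw [Real.sqrt_div_self']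
      _ = N * (d * m * K_F * K_X / Real.sqrt n) := by ring
  -- put it together
  calc ∑ σ : Fin n → Fin d → Bool,
        (((PMF.uniformOfFintype (Fin n → Fin d → Bool)).toMeasure) {σ}).toReal •
          sSup ((fun F : Matrix (Fin d) (Fin m) ℝ =>
            (1 / (n : ℝ)) * ∑ i, ∑ k, rademacherSign (σ i k) * (F.mulVec (x i)) k) ''
          {F : Matrix (Fin d) (Fin m) ℝ | ∀ k j, |F k j| ≤ K_F})
      ≤ ∑ σ : Fin n → Fin d → Bool, N⁻¹ * bnd σ := by
        refine Finset.sum_le_sum fun σ _ => ?_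
        rw [hμ σ, smul_eq_mul]
        exact mul_le_mul_of_nonneg_left (hsup σ) (by positivity)
    _ = N⁻¹ * ∑ σ : Fin n → Fin d → Bool, bnd σ := by rw [Finset.mul_sum]
    _ ≤ N⁻¹ * (N * (d * m * K_F * K_X / Real.sqrt n)) :=
        mul_le_mul_of_nonneg_left hbndsum (by positivity)
    _ = d * m * K_F * K_X / Real.sqrt n := by
        rw [← mul_assoc, inv_mul_cancel₀ hNpos.ne', one_mul]
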